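/- In the Taft algebra A_N, the right modular function α determined by the right integral t = Σ_{j=0}^{N-1} x^{N-1}g^j satisfies α(g) = ω and α(x) = 0; i.e., g·t = ω·t and x·t = 0. -/

import Mathlib

/-- In the Taft algebra `A_N`, the right modular function `α` determined by the
right integral `t = Σ_{j=0}^{N-1} x^{N-1} g^j` satisfies `α g = ω`, `α x = 0`:
that is, `g·t = ω·t` and `x·t = 0`. -/
theorem taft_modular_function
    (k : Type*) [Field k] (N : ℕ) (hN : 2 ≤ N)
    (ω : k) (hω : IsPrimitiveRoot ω N)
    (A : Type*) [Ring A] [Algebra k A]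
    (g x : A) (hg : g ^ N = 1) (hx : x ^ N = 0) (hxg : x * g = ω • (g * x))
    (b : Module.Basis (Fin N × Fin N) k A)
    (hb : ∀ i j : Fin N, b (i, j) = x ^ (i : ℕ) * g ^ (j : ℕ)) :
    g * (∑ j ∈ Finset.range N, x ^ (N - 1) * g ^ j) =
      ω • (∑ j ∈ Finset.range N, x ^ (N - 1) * g ^ j) ∧
    x * (∑ j ∈ Finset.range N, x ^ (N - 1) * g ^ j) = 0 := by
  have hωN : ω ^ N = 1 := hω.pow_eq_one
  have hω0 : ω ≠ 0 := by
    intro h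
    rw [h, zero_pow (by omega)] at hωN
    exact zero_ne_one hωN
  have hgx : g * x = ω⁻¹ • (x * g) := by
    rw [hxg, smul_smul, inv_mul_cancel₀ hω0, one_smul]
  have key : ∀ m : ℕ, g * x ^ m = (ω⁻¹ ^ m) • (x ^ m * g) := by
    intro m
    induction m with
    | zero => simp
    | succ m ih =>
      rw [pow_succ', ← mul_assoc, hgx, smul_mul_assoc, mul_assoc, ih,
        mul_smul_comm, smul_smul]
      simp [pow_succ', mul_assoc]
  -- ω⁻¹ ^ (N - 1) = ω
  have hωinv : ω⁻¹ ^ (N - 1) = ω := by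
    rw [inv_pow]
    exact inv_eq_of_mul_eq_one_right (by rw [← pow_succ, show N - 1 + 1 = N by omega, hωN])
  constructor
  · rw [Finset.mul_sum]
    have step : ∀ j ∈ Finset.range N,
        g * (x ^ (N - 1) * g ^ j) = ω • (x ^ (N - 1) * g ^ (j + 1)) := by
      intro j _
      rw [← mul_assoc, key, hωinv, smul_mul_assoc, mul_assoc, ← pow_succ']
    have reidx : ∑ j ∈ Finset.range N, x ^ (N - 1) * g ^ (j + 1) =
        ∑ j ∈ Finset.range N, x ^ (N - 1) * g ^ j := by
      have h1 := Finset.sum_range_succ (fun j => x ^ (N - 1) * g ^ j) N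
      have h2 := Finset.sum_range_succ' (fun j => x ^ (N - 1) * g ^ j) N
      rw [h1] at h2
      simp only [pow_zero, mul_one, hg] at h2
      exact add_right_cancel h2.symm
    rw [Finset.sum_congr rfl step, ← Finset.smul_sum, reidx]
  · rw [Finset.mul_sum]
    have : ∀ j ∈ Finset.range N, x * (x ^ (N - 1) * g ^ j) = 0 := by
      intro j _
      rw [← mul_assoc, ← pow_succ', show N - 1 + 1 = N by omega, hx, zero_mul]
    rw [Finset.sum_congr rfl this, Finset.sum_const, smul_zero]
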